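/- If 0 < α < 1/12, α < β < 1, and I is a fixed closed interval of positive length, then there exists a Vitali set V such that Alice has a winning strategy in Schmidt's (α,β)-game with target V when Bob's first move is required to be I (i.e., V is (α,β,I)-winning). -/

import Mathlib

namespace Schmidt

/-- A closed interval, given by its two endpoints. -/
abbrev Ivl := ℝ × ℝ

/-- The diameter (length) of an interval. -/
def diam (I : Ivl) : ℝ := I.2 - I.1

/-- The set of points of an interval. -/
def toSet (I : Ivl) : Set ℝ := Set.Icc I.1 I.2

/-- `Sub I J` means the interval `I` is contained in the interval `J`. -/
def Sub (I J : Ivl) : Prop := toSet I ⊆ toSet J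

/-- A strategy: a function producing a move from the finite sequence of
the opponent's moves so far. -/
abbrev Strategy := List Ivl → Ivl

/-- The list of Bob's moves `B 0, …, B n`. -/
def hist (B : ℕ → Ivl) (n : ℕ) : List Ivl := List.ofFn (fun i : Fin (n + 1) => B i)

/-- Bob's sequence of moves `B` is a legal play against Alice's strategy `σ`
in the `(α,β)`-game: `B 0` has positive diameter and each `B (n+1)` is a
subinterval of Alice's previous move `σ (hist B n)` of `β` times its diameter. -/
def BobPlays (β : ℝ) (σ : Strategy) (B : ℕ → Ivl) : Prop :=
  0 < diam (B 0) ∧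
  ∀ n, Sub (B (n + 1)) (σ (hist B n)) ∧ diam (B (n + 1)) = β * diam (σ (hist B n))

/-- `σ` is a legal strategy for Alice in the `(α,β)`-game: whenever Bob's
moves so far are legal, Alice's response is a subinterval of Bob's last move
of `α` times its diameter. -/
def AliceLegal (α β : ℝ) (σ : Strategy) : Prop :=
  ∀ B : ℕ → Ivl, ∀ n : ℕ, 0 < diam (B 0) →
    (∀ m, m < n → Sub (B (m + 1)) (σ (hist B m)) ∧
      diam (B (m + 1)) = β * diam (σ (hist B m))) →
    Sub (σ (hist B n)) (B n) ∧ diam (σ (hist B n)) = α * diam (B n)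

/-- `σ` is a winning strategy for Alice in Schmidt's `(α,β)`-game with target `T`:
it is legal, and in every run against it every point of the intersection of
Alice's moves lies in `T`. -/
def AliceWinsWith (α β : ℝ) (T : Set ℝ) (σ : Strategy) : Prop :=
  AliceLegal α β σ ∧
  ∀ B : ℕ → Ivl, BobPlays β σ B →
    ∀ x : ℝ, (∀ n, x ∈ toSet (σ (hist B n))) → x ∈ T

/-- `T` is `(α,β)`-winning: Alice has a winning strategy. -/
def Winning (α β : ℝ) (T : Set ℝ) : Prop := ∃ σ, AliceWinsWith α β T σ

/-- The list of Alice's moves `A 0, …, A (n-1)`. -/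
def histA (A : ℕ → Ivl) (n : ℕ) : List Ivl := List.ofFn (fun i : Fin n => A i)

/-- Alice's sequence of moves `A` is a legal play against Bob's strategy `τ`. -/
def AlicePlays (α : ℝ) (τ : Strategy) (A : ℕ → Ivl) : Prop :=
  ∀ n, Sub (A n) (τ (histA A n)) ∧ diam (A n) = α * diam (τ (histA A n))

/-- `τ` is a legal strategy for Bob in the `(α,β)`-game. -/
def BobLegal (α β : ℝ) (τ : Strategy) : Prop :=
  0 < diam (τ []) ∧
  ∀ A : ℕ → Ivl, ∀ n : ℕ,
    (∀ m, m ≤ n → Sub (A m) (τ (histA A m)) ∧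
      diam (A m) = α * diam (τ (histA A m))) →
    Sub (τ (histA A (n + 1))) (A n) ∧ diam (τ (histA A (n + 1))) = β * diam (A n)

/-- `τ` is a winning strategy for Bob in Schmidt's `(α,β)`-game with target `T`. -/
def BobWinsWith (α β : ℝ) (T : Set ℝ) (τ : Strategy) : Prop :=
  BobLegal α β τ ∧
  ∀ A : ℕ → Ivl, AlicePlays α τ A →
    ∀ x : ℝ, (∀ n, x ∈ toSet (A n)) → x ∉ T

/-- Bob has a winning strategy in the `(α,β)`-game with target `T`. -/
def BobWinning (α β : ℝ) (T : Set ℝ) : Prop := ∃ τ, BobWinsWith α β T τ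

/-- `V` is a Vitali set: it contains exactly one representative of each
coset of `ℚ` in `ℝ`. -/
def IsVitali (V : Set ℝ) : Prop :=
  ∀ x : ℝ, ∃! v : ℝ, v ∈ V ∧ ∃ q : ℚ, x - v = (q : ℝ)

/-- `P` is a partial Vitali set: it contains at most one representative of
each coset of `ℚ` in `ℝ`. -/
def IsPartialVitali (P : Set ℝ) : Prop :=
  ∀ x ∈ P, ∀ y ∈ P, (∃ q : ℚ, x - y = (q : ℝ)) → x = y

/-- `T` is `(α,β,I)`-winning: Alice has a winning strategy in Schmidt's
`(α,β)`-game with target `T` when Bob's first move is required to be `I`. -/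
def WinningFrom (α β : ℝ) (T : Set ℝ) (I : Ivl) : Prop :=
  ∃ σ : Strategy,
    (∀ B : ℕ → Ivl, B 0 = I → ∀ n : ℕ,
      (∀ m, m < n → Sub (B (m + 1)) (σ (hist B m)) ∧
        diam (B (m + 1)) = β * diam (σ (hist B m))) →
      Sub (σ (hist B n)) (B n) ∧ diam (σ (hist B n)) = α * diam (B n)) ∧
    (∀ B : ℕ → Ivl, B 0 = I → BobPlays β σ B →
      ∀ x : ℝ, (∀ n, x ∈ toSet (σ (hist B n))) → x ∈ T)


/-! ### Auxiliary development -/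

attribute [local instance] Classical.propDecidable

/-- An enumeration of the rationals. -/
noncomputable def ratEnum : ℕ → ℚ := fun n => (Denumerable.eqv ℚ).symm n

lemma ratEnum_surj : Function.Surjective ratEnum :=
  (Denumerable.eqv ℚ).symm.surjective

/-- Diameter of Bob's `n`-th move in a legal run starting from diameter `ρ`. -/
noncomputable def bobD (α β ρ : ℝ) (n : ℕ) : ℝ := (α * β) ^ n * ρ

/-- Absolute value of the rational dodged at level `n`. -/
noncomputable def qT (n : ℕ) : ℝ := |((ratEnum (Nat.unpair (n - 1)).1 : ℚ) : ℝ)|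

lemma half_int_dist (m k : ℤ) : (1:ℝ)/2 ≤ |(m:ℝ) + 1/2 - k| := by
  rcases le_or_gt (k:ℝ) (m:ℝ) with h | h
  · rw [le_abs]; left; linarith
  · have h' : (m:ℝ) + 1 ≤ k := by
      have : m + 1 ≤ k := by exact_mod_cast Int.add_one_le_iff.mpr (by exact_mod_cast h)
      exact_mod_cast this
    rw [le_abs]; right; linarith

/-- The key dodging lemma: one can pick a grid unit `g ∈ [G, 2G]` such that
no integer multiple of `g` is within `a` of `q`. -/
lemma dodge {G a q : ℝ} (hG : 0 < G) (ha : 0 < a) (h2 : 2 * a < G) (hq : 2 * a ≤ q) :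
    ∃ g, G ≤ g ∧ g ≤ 2 * G ∧ ∀ k : ℤ, a < |q - k * g| := by
  rcases le_or_gt q (3 * G / 2) with hsmall | hbig
  · refine ⟨2 * G, by linarith, le_rfl, fun k => ?_⟩
    rcases le_or_gt (k:ℝ) 0 with hk | hk
    · have h1 : q ≤ q - k * (2 * G) := by nlinarith
      rw [abs_of_pos (by linarith)]
      linarith
    · have hk1 : (1:ℝ) ≤ (k:ℝ) := by
        have : (1:ℤ) ≤ k := by exact_mod_cast hk
        exact_mod_cast this
      have h1 : G / 2 ≤ k * (2 * G) - q := by nlinarith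
      rw [abs_sub_comm, abs_of_pos (by linarith)]
      linarith
  · set m : ℤ := ⌊q / G - 1/2⌋ with hmdef
    have h1 : (m:ℝ) ≤ q / G - 1/2 := Int.floor_le _
    have h3 : q / G - 1/2 < (m:ℝ) + 1 := Int.lt_floor_add_one _
    have hqG : 3/2 < q / G := by rw [lt_div_iff₀ hG]; linarith
    have hm1 : (1:ℝ) ≤ (m:ℝ) := by
      have : (1:ℤ) ≤ m := Int.le_floor.mpr (by push_cast; linarith)
      exact_mod_cast this
    have hmpos : (0:ℝ) < (m:ℝ) + 1/2 := by linarith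
    set g : ℝ := q / ((m:ℝ) + 1/2) with hgdef
    have hqg : ((m:ℝ) + 1/2) * g = q := by
      rw [hgdef]; field_simp
    have hgG : G ≤ g := by
      rw [hgdef, le_div_iff₀ hmpos]
      have h4 : (m:ℝ) + 1/2 ≤ q / G := by linarith
      calc G * ((m:ℝ) + 1/2) ≤ G * (q / G) := by nlinarith
        _ = q := by field_simp
    have hg2 : g ≤ 2 * G := by
      rw [hgdef, div_le_iff₀ hmpos]
      rcases le_or_gt (2 * G) q with h2G | h2G
      · have e : q / G = 2 * (q / (2 * G)) := by field_simp
        have h7 : (1:ℝ) ≤ q / (2 * G) := by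
          rw [le_div_iff₀ (by linarith)]; linarith
        have h5 : q / (2 * G) ≤ (m:ℝ) + 1/2 := by linarith
        calc q = (2 * G) * (q / (2 * G)) := by field_simp
          _ ≤ (2 * G) * ((m:ℝ) + 1/2) := by nlinarith
      · nlinarith
    refine ⟨g, hgG, hg2, fun k => ?_⟩
    have hgpos : 0 < g := lt_of_lt_of_le hG hgG
    have hqk : q - k * g = ((m:ℝ) + 1/2 - k) * g := by
      rw [← hqg]; ring
    rw [hqk, abs_mul, abs_of_pos hgpos]
    have hd := half_int_dist m k
    nlinarith

/-- The grid unit at level `n`. -/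
noncomputable def grid (α β ρ : ℝ) (n : ℕ) : ℝ :=
  if h : ∃ g, bobD α β ρ n / 6 ≤ g ∧ g ≤ 2 * (bobD α β ρ n / 6) ∧
      (2 * (α * bobD α β ρ n) ≤ qT n → ∀ k : ℤ, α * bobD α β ρ n < |qT n - k * g|)
  then h.choose else 1

lemma grid_spec {α β ρ : ℝ} (hα : 0 < α) (h12 : α < 1/12) {n : ℕ}
    (hb : 0 < bobD α β ρ n) :
    bobD α β ρ n / 6 ≤ grid α β ρ n ∧ grid α β ρ n ≤ 2 * (bobD α β ρ n / 6) ∧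
      (2 * (α * bobD α β ρ n) ≤ qT n →
        ∀ k : ℤ, α * bobD α β ρ n < |qT n - k * grid α β ρ n|) := by
  have hex : ∃ g, bobD α β ρ n / 6 ≤ g ∧ g ≤ 2 * (bobD α β ρ n / 6) ∧
      (2 * (α * bobD α β ρ n) ≤ qT n → ∀ k : ℤ, α * bobD α β ρ n < |qT n - k * g|) := by
    rcases le_or_gt (2 * (α * bobD α β ρ n)) (qT n) with hq | hq
    · obtain ⟨g, h1, h2, h3⟩ := dodge (G := bobD α β ρ n / 6) (a := α * bobD α β ρ n)
        (by linarith) (mul_pos hα hb) (by nlinarith) hq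
      exact ⟨g, h1, h2, fun _ => h3⟩
    · exact ⟨2 * (bobD α β ρ n / 6), by linarith, le_rfl,
        fun h => absurd h (not_le.mpr hq)⟩
  rw [grid, dif_pos hex]
  exact hex.choose_spec

/-- Alice's strategy: at level `0` play the left-aligned subinterval, afterwards
snap the left endpoint to the level's grid. -/
noncomputable def strat (α β ρ : ℝ) : Strategy := fun h =>
  let B := h.getD (h.length - 1) (0, 0)
  if h.length ≤ 1 then (B.1, B.1 + α * (B.2 - B.1))
  else (⌈B.1 / grid α β ρ (h.length - 1)⌉ * grid α β ρ (h.length - 1),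
        ⌈B.1 / grid α β ρ (h.length - 1)⌉ * grid α β ρ (h.length - 1) + α * (B.2 - B.1))

lemma hist_length (B : ℕ → Ivl) (n : ℕ) : (hist B n).length = n + 1 := by simp [hist]

lemma hist_getD (B : ℕ → Ivl) (n : ℕ) : (hist B n).getD n (0, 0) = B n := by
  rw [hist, List.getD_eq_getElem _ _ (by simp), List.getElem_ofFn]

lemma strat_hist (α β ρ : ℝ) (B : ℕ → Ivl) (n : ℕ) :
    strat α β ρ (hist B n) =
      if n = 0 then ((B 0).1, (B 0).1 + α * ((B 0).2 - (B 0).1))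
      else (⌈(B n).1 / grid α β ρ n⌉ * grid α β ρ n,
            ⌈(B n).1 / grid α β ρ n⌉ * grid α β ρ n + α * ((B n).2 - (B n).1)) := by
  simp only [strat, hist_length, Nat.add_sub_cancel, hist_getD]
  rcases Nat.eq_zero_or_pos n with h | h
  · subst h; simp
  · rw [if_neg (by omega), if_neg (by omega)]

lemma diam_strat (α β ρ : ℝ) (B : ℕ → Ivl) (n : ℕ) :
    diam (strat α β ρ (hist B n)) = α * diam (B n) := by
  rw [strat_hist]
  rcases Nat.eq_zero_or_pos n with h | h
  · subst h; rw [if_pos rfl]; simp [diam]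
  · rw [if_neg (by omega)]; simp [diam]

/-! ### Extending a partial Vitali set to a Vitali set -/

/-- The setoid of rational translation. -/
def qrel : Setoid ℝ :=
  ⟨fun x y => ∃ q : ℚ, x - y = (q:ℝ), by
    refine ⟨fun x => ⟨0, by simp⟩, ?_, ?_⟩
    · rintro x y ⟨q, h⟩
      exact ⟨-q, by push_cast; linarith⟩
    · rintro x y z ⟨q, h⟩ ⟨r, h'⟩
      exact ⟨q + r, by push_cast; linarith⟩⟩

noncomputable def vfun (P : Set ℝ) (c : Quotient qrel) : ℝ :=
  if h : ∃ p, p ∈ P ∧ Quotient.mk qrel p = c then h.choose else c.out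

lemma mk_vfun (P : Set ℝ) (c : Quotient qrel) :
    Quotient.mk qrel (vfun P c) = c := by
  rw [vfun]; split_ifs with h
  · exact h.choose_spec.2
  · exact Quotient.out_eq c

lemma extend_vitali {P : Set ℝ} (hP : IsPartialVitali P) :
    ∃ V, IsVitali V ∧ P ⊆ V := by
  refine ⟨Set.range (vfun P), ?_, ?_⟩
  · intro x
    refine ⟨vfun P (Quotient.mk qrel x), ⟨⟨_, rfl⟩, ?_⟩, ?_⟩
    · obtain ⟨q, hq⟩ : qrel.r (vfun P (Quotient.mk qrel x)) x :=
        Quotient.exact (mk_vfun P (Quotient.mk qrel x))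
      exact ⟨-q, by push_cast; linarith⟩
    · rintro y ⟨⟨c, rfl⟩, q, hq⟩
      have h1 : Quotient.mk qrel (vfun P c) = Quotient.mk qrel x :=
        Quotient.sound ⟨-q, by push_cast; linarith⟩
      rw [mk_vfun] at h1
      rw [h1]
  · intro p hp
    have hx : ∃ p', p' ∈ P ∧ Quotient.mk qrel p' = Quotient.mk qrel p := ⟨p, hp, rfl⟩
    refine ⟨Quotient.mk qrel p, ?_⟩
    rw [vfun, dif_pos hx]
    exact hP _ hx.choose_spec.1 _ hp (Quotient.exact hx.choose_spec.2)

/-- for `0 < α < 1/12`, `α < β < 1` and a fixed first move `I`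
(a closed interval of positive length), there is a Vitali set that is
`(α,β,I)`-winning. -/
theorem stmt11 (α β : ℝ) (hα0 : 0 < α) (hα12 : α < 1/12) (hαβ : α < β)
    (hβ1 : β < 1) (I : Ivl) (hI : 0 < diam I) :
    ∃ V : Set ℝ, IsVitali V ∧ WinningFrom α β V I := by
  classical
  set ρ := diam I with hρdef
  have hβ0 : 0 < β := lt_trans hα0 hαβ
  have hαβ1 : α * β < 1 := by nlinarith
  have hαβ0 : 0 < α * β := mul_pos hα0 hβ0
  have hbpos : ∀ n, 0 < bobD α β ρ n := fun n => mul_pos (pow_pos hαβ0 n) hI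
  -- in every legal run from I, Bob's n-th move has diameter `bobD n`
  have key : ∀ B : ℕ → Ivl, B 0 = I →
      ∀ n, (∀ m, m < n → Sub (B (m+1)) (strat α β ρ (hist B m)) ∧
        diam (B (m+1)) = β * diam (strat α β ρ (hist B m))) →
      ∀ k, k ≤ n → diam (B k) = bobD α β ρ k := by
    intro B hB0 n hleg k hk
    induction k with
    | zero => rw [hB0]; simp [bobD]; rfl
    | succ k ih =>
      have h1 := (hleg k hk).2
      rw [h1, diam_strat, ih (by omega)]
      rw [bobD, bobD, pow_succ]; ring
  -- Alice's response is always a legal subinterval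
  have subkey : ∀ B : ℕ → Ivl, B 0 = I → ∀ n,
      diam (B n) = bobD α β ρ n → Sub (strat α β ρ (hist B n)) (B n) := by
    intro B hB0 n hd
    rw [strat_hist]
    rcases Nat.eq_zero_or_pos n with h | h
    · subst h
      rw [if_pos rfl]
      have hd0 : (B 0).2 - (B 0).1 = ρ := by
        have hb0 : bobD α β ρ 0 = ρ := by simp [bobD]
        rw [← hb0, ← hd]; rfl
      have h1 : α * ((B 0).2 - (B 0).1) ≤ (B 0).2 - (B 0).1 := by
        rw [hd0]; nlinarith
      apply Set.Icc_subset_Icc le_rfl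
      show (B 0).1 + α * ((B 0).2 - (B 0).1) ≤ (B 0).2
      linarith
    · rw [if_neg (by omega)]
      obtain ⟨hg1, hg2, -⟩ := grid_spec hα0 hα12 (hbpos n)
      have hgpos : 0 < grid α β ρ n := lt_of_lt_of_le (by linarith [hbpos n]) hg1
      have hdc : (B n).2 - (B n).1 = bobD α β ρ n := hd
      have h1 : (B n).1 ≤ ⌈(B n).1 / grid α β ρ n⌉ * grid α β ρ n :=
        (div_le_iff₀ hgpos).mp (Int.le_ceil _)
      have h2 : (⌈(B n).1 / grid α β ρ n⌉ : ℝ) * grid α β ρ n < (B n).1 + grid α β ρ n := by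
        have h0 := Int.ceil_lt_add_one ((B n).1 / grid α β ρ n)
        calc (⌈(B n).1 / grid α β ρ n⌉ : ℝ) * grid α β ρ n
            < ((B n).1 / grid α β ρ n + 1) * grid α β ρ n := by nlinarith
          _ = (B n).1 + grid α β ρ n := by field_simp
      have h3 : α * bobD α β ρ n < bobD α β ρ n / 12 := by nlinarith [hbpos n]
      apply Set.Icc_subset_Icc h1
      have : α * ((B n).2 - (B n).1) = α * bobD α β ρ n := by rw [hdc]
      nlinarith [hbpos n]
  -- the partial Vitali set of potential outcomes
  set P : Set ℝ := {x | ∀ n : ℕ, 1 ≤ n → ∃ m : ℤ,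
      (m : ℝ) * grid α β ρ n ≤ x ∧ x ≤ m * grid α β ρ n + α * bobD α β ρ n} with hPdef
  have hPV : IsPartialVitali P := by
    intro x hx y hy hxy
    obtain ⟨q, hq⟩ := hxy
    by_cases hq0 : (q:ℝ) = 0
    · linarith [hq]
    · exfalso
      obtain ⟨i, hi⟩ := ratEnum_surj q
      have hqabs : 0 < |(q:ℝ)| := abs_pos.mpr hq0
      obtain ⟨j, hj⟩ : ∃ j : ℕ, (α*β)^j < |(q:ℝ)| / (2 * α * ρ) :=
        exists_pow_lt_of_lt_one (div_pos hqabs (by nlinarith [mul_pos hα0 hI])) hαβ1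
      set n := Nat.pair i j + 1 with hn
      have hsub : n - 1 = Nat.pair i j := by omega
      have hqT : qT n = |(q:ℝ)| := by
        simp only [qT, hsub, Nat.unpair_pair, hi]
      have hjn : j ≤ n := le_trans (Nat.right_le_pair i j) (Nat.le_succ _)
      have hmono : bobD α β ρ n ≤ bobD α β ρ j := by
        rw [bobD, bobD]
        exact mul_le_mul_of_nonneg_right
          (pow_le_pow_of_le_one (le_of_lt hαβ0) (le_of_lt hαβ1) hjn) (le_of_lt hI)
      have hcond : 2 * (α * bobD α β ρ n) ≤ qT n := by
        rw [hqT]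
        have hlt : 2 * (α * bobD α β ρ n) < |(q:ℝ)| := by
          calc 2 * (α * bobD α β ρ n) ≤ 2 * (α * bobD α β ρ j) := by nlinarith
            _ = (α*β)^j * (2 * α * ρ) := by simp only [bobD]; ring
            _ < |(q:ℝ)| := (lt_div_iff₀ (by nlinarith [mul_pos hα0 hI])).mp hj
        exact le_of_lt hlt
      obtain ⟨-, -, hdodge⟩ := grid_spec hα0 hα12 (hbpos n)
      have hk := hdodge hcond
      obtain ⟨m₁, hm1a, hm1b⟩ := hx n (by omega)
      obtain ⟨m₂, hm2a, hm2b⟩ := hy n (by omega)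
      rcases le_or_gt 0 (q:ℝ) with hqs | hqs
      · have e : qT n - ((m₁ - m₂ : ℤ):ℝ) * grid α β ρ n
            = (x - m₁ * grid α β ρ n) - (y - m₂ * grid α β ρ n) := by
          rw [hqT, abs_of_nonneg hqs]; push_cast; linarith [hq]
        have habs : |qT n - ((m₁ - m₂ : ℤ):ℝ) * grid α β ρ n| ≤ α * bobD α β ρ n := by
          rw [e]
          rw [abs_le]
          constructor <;> [linarith; linarith]
        exact absurd habs (not_le.mpr (hk _))
      · have e : qT n - ((m₂ - m₁ : ℤ):ℝ) * grid α β ρ n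
            = (y - m₂ * grid α β ρ n) - (x - m₁ * grid α β ρ n) := by
          rw [hqT, abs_of_neg hqs]; push_cast; linarith [hq]
        have habs : |qT n - ((m₂ - m₁ : ℤ):ℝ) * grid α β ρ n| ≤ α * bobD α β ρ n := by
          rw [e]
          rw [abs_le]
          constructor <;> [linarith; linarith]
        exact absurd habs (not_le.mpr (hk _))
  obtain ⟨V, hV, hPsub⟩ := extend_vitali hPV
  refine ⟨V, hV, strat α β ρ, ?_, ?_⟩
  · intro B hB0 n hleg
    have hd : diam (B n) = bobD α β ρ n := key B hB0 n hleg n le_rfl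
    exact ⟨subkey B hB0 n hd, by rw [diam_strat]⟩
  · intro B hB0 hplay x hxin
    apply hPsub
    rw [hPdef]
    simp only [Set.mem_setOf_eq]
    intro n hn
    obtain ⟨n', rfl⟩ : ∃ n', n = n' + 1 := ⟨n - 1, by omega⟩
    have hleg : ∀ m, m < n' + 1 → Sub (B (m+1)) (strat α β ρ (hist B m)) ∧
        diam (B (m+1)) = β * diam (strat α β ρ (hist B m)) := fun m _ => hplay.2 m
    have hd : diam (B (n'+1)) = bobD α β ρ (n'+1) := key B hB0 (n'+1) hleg _ le_rfl
    have hdc : (B (n'+1)).2 - (B (n'+1)).1 = bobD α β ρ (n'+1) := hd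
    have hx := hxin (n'+1)
    rw [strat_hist, if_neg (by omega)] at hx
    simp only [toSet, Set.mem_Icc] at hx
    refine ⟨⌈(B (n'+1)).1 / grid α β ρ (n'+1)⌉, hx.1, ?_⟩
    have h2 := hx.2
    rw [hdc] at h2
    exact h2


end Schmidt
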